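/- Let Ψ be an infinite set and T₁, T₂ finite subsets of Ψ. Then the subgroup of S_Ψ generated by the union of the pointwise stabilizers S_{Ψ|T₁} and S_{Ψ|T₂} equals the pointwise stabilizer S_{Ψ|T₁∩T₂}. -/

import Mathlib

/-- Any function injective on a finset extends to a permutation supported in
`s ∪ s.image f`. -/
theorem exists_perm_extend {α : Type} [DecidableEq α] (s : Finset α) (f : α → α)
    (hf : Set.InjOn f s) :
    ∃ σ : Equiv.Perm α, (∀ x ∈ s, σ x = f x) ∧
      (∀ x, x ∉ s → x ∉ s.image f → σ x = x) := by
  induction s using Finset.induction_on with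
  | empty => exact ⟨1, by simp, by simp⟩
  | @insert a s ha ih =>
    obtain ⟨σ, h1, h2⟩ := ih (hf.mono (by simp [Finset.subset_insert]))
    refine ⟨σ * Equiv.swap a (σ⁻¹ (f a)), ?_, ?_⟩
    · intro x hx
      rcases Finset.mem_insert.1 hx with rfl | hx
      · simp [Equiv.Perm.mul_apply, Equiv.swap_apply_left]
      · have hxa : x ≠ a := fun h => ha (h ▸ hx)
        have hxb : x ≠ σ⁻¹ (f a) := by
          intro h
          have : σ x = f a := by rw [h]; simp
          rw [h1 x hx] at this
          exact hxa (hf (by simp [hx]) (by simp) this)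
        rw [Equiv.Perm.mul_apply, Equiv.swap_apply_of_ne_of_ne hxa hxb, h1 x hx]
    · intro x hx hximg
      have hxa : x ≠ a := fun h => hx (h ▸ Finset.mem_insert_self a s)
      have hxs : x ∉ s := fun h => hx (Finset.mem_insert_of_mem h)
      have hxi : x ∉ s.image f := fun h => hximg (Finset.image_subset_image (Finset.subset_insert a s) h)
      have hσx : σ x = x := h2 x hxs hxi
      have hxb : x ≠ σ⁻¹ (f a) := by
        intro h
        have : σ x = f a := by rw [h]; simp
        rw [hσx] at this
        exact hximg (Finset.mem_image.2 ⟨a, Finset.mem_insert_self a s, this.symm⟩)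
      rw [Equiv.Perm.mul_apply, Equiv.swap_apply_of_ne_of_ne hxa hxb, hσx]

/-- The pointwise stabilizer `S_{Ψ|T}` of a set `T ⊆ Ψ` in the symmetric group
`S_Ψ`. -/
def pointwiseStabilizer {Ψ : Type} (T : Set Ψ) : Subgroup (Equiv.Perm Ψ) where
  carrier := {g : Equiv.Perm Ψ | ∀ t ∈ T, g t = t}
  one_mem' := fun t _ => rfl
  mul_mem' := fun {a b} ha hb t ht => by
    simp only [Equiv.Perm.mul_apply, hb t ht, ha t ht]
  inv_mem' := fun {a} ha t ht => by
    have := ha t ht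
    exact a.injective (by simpa using this.symm)

theorem mem_pointwiseStabilizer {Ψ : Type} {T : Set Ψ} {g : Equiv.Perm Ψ} :
    g ∈ pointwiseStabilizer T ↔ ∀ t ∈ T, g t = t := Iff.rfl

/-- **The pointwise stabilizers of two finite sets generate the pointwise
stabilizer of their intersection**: for finite `T₁, T₂ ⊆ Ψ` (with `Ψ`
infinite), the subgroup of `S_Ψ` generated by `S_{Ψ|T₁} ∪ S_{Ψ|T₂}` equals
`S_{Ψ|T₁ ∩ T₂}`. -/
theorem pointwiseStabilizers_generate
    (Ψ : Type) [Infinite Ψ] (T₁ T₂ : Finset Ψ) :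
    Subgroup.closure ((pointwiseStabilizer (T₁ : Set Ψ) : Set (Equiv.Perm Ψ)) ∪
        (pointwiseStabilizer (T₂ : Set Ψ) : Set (Equiv.Perm Ψ))) =
      pointwiseStabilizer ((T₁ : Set Ψ) ∩ (T₂ : Set Ψ)) := by
  classical
  apply le_antisymm
  · rw [Subgroup.closure_le]
    rintro g (hg | hg) t ⟨ht1, ht2⟩
    · exact hg t ht1
    · exact hg t ht2
  · intro g hg
    rw [mem_pointwiseStabilizer] at hg
    -- notation
    set F : Finset Ψ := T₁ \ T₂ with hFdef
    set W : Finset Ψ := (F.image g) ∩ T₂ with hWdef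
    set K : Finset Ψ := T₁ ∪ T₂ ∪ F.image g with hKdef
    -- fresh points
    obtain ⟨V, hVsub, hVcard⟩ :=
      (Set.Finite.infinite_compl (K : Set Ψ).toFinite).exists_subset_card_eq W.card
    have hcard : Fintype.card (↥W) = Fintype.card (↥V) := by
      simp [Fintype.card_coe, hVcard]
    let e : ↥W ≃ ↥V := Fintype.equivOfCardEq hcard
    let v : Ψ → Ψ := fun x => if h : x ∈ W then (e ⟨x, h⟩ : Ψ) else x
    have hvval : ∀ x (hx : x ∈ W), v x = (e ⟨x, hx⟩ : Ψ) := fun x hx => dif_pos hx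
    have hvK : ∀ x ∈ W, v x ∉ (K : Set Ψ) := by
      intro x hx
      rw [hvval x hx]
      exact hVsub (e ⟨x, hx⟩).2
    have hvinj : Set.InjOn v W := by
      intro x hx y hy hxy
      rw [hvval x hx, hvval y hy] at hxy
      have := e.injective (Subtype.ext hxy)
      exact congrArg Subtype.val this
    -- the permutation a ∈ Stab T₁ moving bad points of g(F) out of T₂
    obtain ⟨a, ha1, ha2⟩ := exists_perm_extend W v hvinj
    have haT₁ : a ∈ pointwiseStabilizer (T₁ : Set Ψ) := by
      intro t ht
      have htW : t ∉ W := by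
        intro htW
        obtain ⟨ht2⟩ := Finset.mem_inter.1 htW
        obtain ⟨s, hsF, hst⟩ := Finset.mem_image.1 (Finset.mem_inter.1 htW).1
        have htT2 : t ∈ T₂ := (Finset.mem_inter.1 htW).2
        have : g t = t := hg t ⟨ht, htT2⟩
        have hst' : s = t := g.injective (hst.trans this.symm)
        exact (Finset.mem_sdiff.1 hsF).2 (hst' ▸ htT2)
      have htimg : t ∉ W.image v := by
        intro h
        obtain ⟨x, hx, hxt⟩ := Finset.mem_image.1 h
        exact hvK x hx (hxt ▸ (by exact_mod_cast Finset.mem_union_left _ (Finset.mem_union_left _ ht)))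
      exact ha2 t htW htimg
    -- key: a ∘ g sends F outside T₂
    have hkey : ∀ t ∈ F, a (g t) ∉ T₂ := by
      intro t htF
      have hgimg : g t ∈ F.image g := Finset.mem_image_of_mem g htF
      by_cases hW : g t ∈ W
      · intro h
        exact hvK (g t) hW ((ha1 (g t) hW) ▸ (by exact_mod_cast Finset.mem_union_left _ (Finset.mem_union_right _ h)))
      · have hgt2 : g t ∉ T₂ := fun h => hW (Finset.mem_inter.2 ⟨hgimg, h⟩)
        have himg : g t ∉ W.image v := by
          intro h
          obtain ⟨x, hx, hxt⟩ := Finset.mem_image.1 h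
          exact hvK x hx (hxt ▸ (by exact_mod_cast Finset.mem_union_right _ hgimg))
        rw [ha2 (g t) hW himg]
        exact hgt2
    -- the permutation c ∈ Stab T₂ with c t = a (g t) on F
    have hcinj : Set.InjOn (fun x => a (g x)) F :=
      fun x _ y _ h => g.injective (a.injective h)
    obtain ⟨c, hc1, hc2⟩ := exists_perm_extend F (fun x => a (g x)) hcinj
    have hcT₂ : c ∈ pointwiseStabilizer (T₂ : Set Ψ) := by
      intro t ht
      have htF : t ∉ F := fun h => (Finset.mem_sdiff.1 h).2 ht
      have htimg : t ∉ F.image (fun x => a (g x)) := by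
        intro h
        obtain ⟨x, hx, hxt⟩ := Finset.mem_image.1 h
        exact hkey x hx (hxt ▸ ht)
      exact hc2 t htF htimg
    -- h := c⁻¹ * a * g fixes T₁ pointwise
    have hhT₁ : c⁻¹ * a * g ∈ pointwiseStabilizer (T₁ : Set Ψ) := by
      intro t ht
      show c⁻¹ (a (g t)) = t
      by_cases ht2 : t ∈ T₂
      · rw [hg t ⟨ht, ht2⟩, haT₁ t ht]
        nth_rewrite 1 [show (t:Ψ) = c t from (hcT₂ t ht2).symm]
        exact c.symm_apply_apply t
      · have htF : t ∈ F := Finset.mem_sdiff.2 ⟨ht, ht2⟩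
        have := hc1 t htF
        rw [← this]
        exact c.symm_apply_apply t
    -- assemble
    have hrep : g = a⁻¹ * c * (c⁻¹ * a * g) := by group
    rw [hrep]
    have hmemA : ∀ x ∈ pointwiseStabilizer (T₁ : Set Ψ),
        x ∈ Subgroup.closure ((pointwiseStabilizer (T₁ : Set Ψ) : Set (Equiv.Perm Ψ)) ∪
          (pointwiseStabilizer (T₂ : Set Ψ) : Set (Equiv.Perm Ψ))) :=
      fun x hx => Subgroup.subset_closure (Or.inl hx)
    have hmemB : ∀ x ∈ pointwiseStabilizer (T₂ : Set Ψ),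
        x ∈ Subgroup.closure ((pointwiseStabilizer (T₁ : Set Ψ) : Set (Equiv.Perm Ψ)) ∪
          (pointwiseStabilizer (T₂ : Set Ψ) : Set (Equiv.Perm Ψ))) :=
      fun x hx => Subgroup.subset_closure (Or.inr hx)
    exact mul_mem (mul_mem (inv_mem (hmemA a haT₁)) (hmemB c hcT₂)) (hmemA _ hhT₁)
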